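/- (Closed form of a finite sum.) For every real r > 0 and every integer M ≥ 0, ∑_{k=0}^{M} (k+1) r^{k+1} / Γ(k + r + 2) = 1/Γ(r) − r^{M+2}/Γ(M + r + 2), where Γ denotes the real Gamma function. -/

import Mathlib

open Finset

/-- **closed form of a finite sum.** For every real `r > 0` and
every integer `M ≥ 0`,
`∑_{k=0}^{M} (k+1) r^{k+1} / Γ(k+r+2) = 1/Γ(r) − r^{M+2}/Γ(M+r+2)`. -/
theorem finite_sum_gamma_closed_form (r : ℝ) (hr : 0 < r) (M : ℕ) :
    ∑ k ∈ range (M + 1),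
        ((k : ℝ) + 1) * r ^ (k + 1) / Real.Gamma ((k : ℝ) + r + 2) =
      1 / Real.Gamma r - r ^ (M + 2) / Real.Gamma ((M : ℝ) + r + 2) := by
  induction M with
  | zero =>
      have h1 : Real.Gamma (r + 1) = r * Real.Gamma r := Real.Gamma_add_one (ne_of_gt hr)
      have h2 : Real.Gamma (r + 2) = (r + 1) * Real.Gamma (r + 1) := by
        have := Real.Gamma_add_one (show r + 1 ≠ 0 by positivity)
        rw [show r + 1 + 1 = r + 2 by ring] at this
        exact this
      have hΓr : Real.Gamma r ≠ 0 := ne_of_gt (Real.Gamma_pos_of_pos hr)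
      have hΓ2 : Real.Gamma (r + 2) ≠ 0 := ne_of_gt (Real.Gamma_pos_of_pos (by linarith))
      simp only [Nat.zero_add, range_one, sum_singleton, Nat.cast_zero]
      rw [show (0:ℝ) + r + 2 = r + 2 by ring]
      field_simp
      rw [h2, h1]
      ring
  | succ n ih =>
      rw [sum_range_succ, ih]
      have harg : (0:ℝ) < (n : ℝ) + r + 2 := by positivity
      have hrec : Real.Gamma ((n:ℝ) + r + 3) = ((n:ℝ) + r + 2) * Real.Gamma ((n:ℝ) + r + 2) := by
        have := Real.Gamma_add_one (ne_of_gt harg)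
        rw [show (n:ℝ) + r + 2 + 1 = (n:ℝ) + r + 3 by ring] at this
        exact this
      have hΓ1 : Real.Gamma ((n:ℝ) + r + 2) ≠ 0 := ne_of_gt (Real.Gamma_pos_of_pos harg)
      have hΓ2 : Real.Gamma ((n:ℝ) + r + 3) ≠ 0 := ne_of_gt (Real.Gamma_pos_of_pos (by linarith))
      push_cast
      rw [show (n:ℝ) + 1 + r + 2 = (n:ℝ) + r + 3 by ring]
      field_simp
      rw [hrec]
      ring
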